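/- For any module M ∈ mod A, the subcategory Filt(Fac M) is a torsion class in mod A, and it is the minimal torsion class containing M: every torsion class containing M contains Filt(Fac M). -/

import Mathlib

/-!
Common definitions: stability conditions, wall-and-chamber structures, and τ-tilting theory
for a finite-dimensional algebra `A` over a field `K`.
Modules are (left) `A`-modules; `mod A` is the class of finitely generated ones.
-/

set_option linter.unusedSectionVars false

universe u

open Module MulOpposite

namespace WCS

variable (K : Type u) [Field K] (A : Type u) [Ring A] [Algebra K A]

/-! ### Dimension vectors and stability -/

section Stability

/-- The subquotient `s j.succ / s j.castSucc` of a chain of submodules. -/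
abbrev factorAt {M : Type u} [AddCommGroup M] [Module A M]
    {t : ℕ} (s : Fin (t + 1) → Submodule A M) (j : Fin t) : Type u :=
  ↥(s j.succ) ⧸ Submodule.comap (s j.succ).subtype (s j.castSucc)

/-- `s` is a composition series of `M`: a chain from `⊥` to `⊤` all of whose
subquotients are simple. -/
def IsCompSeries {M : Type u} [AddCommGroup M] [Module A M] (t : ℕ)
    (s : Fin (t + 1) → Submodule A M) : Prop :=
  s 0 = ⊥ ∧ s (Fin.last t) = ⊤ ∧ (∀ j : Fin t, s j.castSucc ≤ s j.succ) ∧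
    ∀ j : Fin t, IsSimpleModule A (factorAt A s j)

open Classical in
/-- The multiplicity of the simple module `S` among the composition factors of `M`
(computed from a choice of composition series; by the Jordan–Hölder theorem this is
independent of the choice). -/
noncomputable def mult (S : Type u) [AddCommGroup S] [Module A S]
    (M : Type u) [AddCommGroup M] [Module A M] : ℕ :=
  if h : ∃ (t : ℕ) (s : Fin (t + 1) → Submodule A M), IsCompSeries A t s then
    Nat.card {j : Fin h.choose // Nonempty (factorAt A h.choose_spec.choose j ≃ₗ[A] S)}
  else 0

variable {n : ℕ} (S : Fin n → Type u) [∀ i, AddCommGroup (S i)] [∀ i, Module A (S i)]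
  [∀ i, Module K (S i)] [∀ i, SMulCommClass A K (S i)]

/-- `S : Fin n → Type u` is a complete irredundant list of the simple `A`-modules. -/
def SimpleParam : Prop :=
  (∀ i, IsSimpleModule A (S i)) ∧
    (∀ i j, Nonempty (S i ≃ₗ[A] S j) → i = j) ∧
    ∀ (M : Type u) [AddCommGroup M] [Module A M], IsSimpleModule A M →
      ∃ i, Nonempty (M ≃ₗ[A] S i)

/-- The pairing `⟨v, dim M⟩ = vᵀ D_A (dim M)`, where `dim M` is the dimension vector of `M`
(multiplicities of the simples as composition factors) and
`D_A = diag (dim_K End (S 1), …, dim_K End (S n))`. -/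
noncomputable def pairing (v : Fin n → ℝ) (M : Type u) [AddCommGroup M] [Module A M] : ℝ :=
  ∑ i, v i * (Module.finrank K (S i →ₗ[A] S i) : ℝ) * (mult A (S i) M : ℝ)

/-- `M` is `v`-semistable: `⟨v, dim M⟩ = 0` and `⟨v, dim L⟩ ≤ 0` for every submodule `L ≤ M`. -/
def IsSemistable (v : Fin n → ℝ) (M : Type u) [AddCommGroup M] [Module A M] : Prop :=
  pairing K A S v M = 0 ∧ ∀ L : Submodule A M, pairing K A S v ↥L ≤ 0

/-- `M` is `v`-stable: `⟨v, dim M⟩ = 0` and `⟨v, dim L⟩ < 0` for every nonzero proper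
submodule `L` of `M`. -/
def IsStable (v : Fin n → ℝ) (M : Type u) [AddCommGroup M] [Module A M] : Prop :=
  pairing K A S v M = 0 ∧ ∀ L : Submodule A M, L ≠ ⊥ → L ≠ ⊤ → pairing K A S v ↥L < 0

/-- A filtration of `M` by submodules, from `⊥` to `⊤`, with `v`-stable subquotients. -/
def IsStableFiltration (v : Fin n → ℝ) {M : Type u} [AddCommGroup M] [Module A M]
    (t : ℕ) (s : Fin (t + 1) → Submodule A M) : Prop :=
  s 0 = ⊥ ∧ s (Fin.last t) = ⊤ ∧ StrictMono s ∧
    ∀ j : Fin t, IsStable K A S v (factorAt A s j)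

/-- The stability space `D(M) = {v : M is v-semistable}` of a module `M`. -/
def stabilitySpace (M : Type u) [AddCommGroup M] [Module A M] : Set (Fin n → ℝ) :=
  { v | IsSemistable K A S v M }

/-- The union of all walls: the union of the stability spaces `D(M)` over all nonzero
finitely generated `A`-modules `M`. -/
def wallsUnion : Set (Fin n → ℝ) :=
  { v | ∃ M : ModuleCat.{u} A, Module.Finite A M ∧ Nontrivial M ∧ IsSemistable K A S v M }

end Stability

section Torsion

/-- A pair of full subcategories of `mod A` (given as isomorphism-closed predicates on
modules) is a torsion pair if they are Hom-orthogonal and every finitely generated module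
is an extension of a torsion-free module by a torsion module. -/
def IsTorsionPair (T F : ModuleCat.{u} A → Prop) : Prop :=
  (∀ M N : ModuleCat.{u} A, T M → F N → ∀ f : M →ₗ[A] N, f = 0) ∧
  ∀ M : ModuleCat.{u} A, Module.Finite A M →
    ∃ tM : Submodule A M, T (ModuleCat.of A ↥tM) ∧ F (ModuleCat.of A (M ⧸ tM))

/-- A torsion class in `mod A`: a class of finitely generated modules, closed under
isomorphisms, quotients and extensions. -/
def IsTorsionClass (T : ModuleCat.{u} A → Prop) : Prop :=
  (∀ M : ModuleCat.{u} A, T M → Module.Finite A M) ∧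
  (∀ M N : ModuleCat.{u} A, Nonempty (M ≃ₗ[A] N) → T M → T N) ∧
  (∀ M : ModuleCat.{u} A, T M → ∀ N : Submodule A M, T (ModuleCat.of A (M ⧸ N))) ∧
  ∀ (X Y Z : ModuleCat.{u} A) (f : X →ₗ[A] Y) (g : Y →ₗ[A] Z), Module.Finite A Y →
    Function.Injective f → Function.Surjective g → LinearMap.range f = LinearMap.ker g →
    T X → T Z → T Y

/-- A torsion-free class in `mod A`: a class of finitely generated modules, closed under
isomorphisms, submodules and extensions. -/
def IsTorsionFreeClass (F : ModuleCat.{u} A → Prop) : Prop :=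
  (∀ M : ModuleCat.{u} A, F M → Module.Finite A M) ∧
  (∀ M N : ModuleCat.{u} A, Nonempty (M ≃ₗ[A] N) → F M → F N) ∧
  (∀ M : ModuleCat.{u} A, F M → ∀ N : Submodule A M, F (ModuleCat.of A ↥N)) ∧
  ∀ (X Y Z : ModuleCat.{u} A) (f : X →ₗ[A] Y) (g : Y →ₗ[A] Z), Module.Finite A Y →
    Function.Injective f → Function.Surjective g → LinearMap.range f = LinearMap.ker g →
    F X → F Z → F Y

/-- `M` belongs to `Fac T`: there is an epimorphism `T^k → M` for some `k`. -/
def InFac (T : Type u) [AddCommGroup T] [Module A T]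
    (M : Type u) [AddCommGroup M] [Module A M] : Prop :=
  ∃ (k : ℕ) (f : (Fin k → T) →ₗ[A] M), Function.Surjective f

/-- `M` belongs to `Filt (Fac T)`: `M` has a filtration whose subquotients lie in `Fac T`. -/
def InFiltFac (T : Type u) [AddCommGroup T] [Module A T]
    (M : Type u) [AddCommGroup M] [Module A M] : Prop :=
  ∃ (t : ℕ) (s : Fin (t + 1) → Submodule A M),
    s 0 = ⊥ ∧ s (Fin.last t) = ⊤ ∧ (∀ j : Fin t, s j.castSucc ≤ s j.succ) ∧
      ∀ j : Fin t, InFac A T (factorAt A s j)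

/-- The subcategory `Fac T` of `mod A`. -/
def FacClass (T : Type u) [AddCommGroup T] [Module A T] : ModuleCat.{u} A → Prop :=
  fun M => Module.Finite A M ∧ InFac A T M

/-- `f : X → M` is a right `𝒳`-approximation of `M`. -/
def IsRightApprox (𝒳 : ModuleCat.{u} A → Prop) {X M : ModuleCat.{u} A}
    (f : X →ₗ[A] M) : Prop :=
  𝒳 X ∧ ∀ Y : ModuleCat.{u} A, 𝒳 Y → ∀ g : Y →ₗ[A] M, ∃ h : Y →ₗ[A] X, f.comp h = g

/-- `f : M → X` is a left `𝒳`-approximation of `M`. -/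
def IsLeftApprox (𝒳 : ModuleCat.{u} A → Prop) {X M : ModuleCat.{u} A}
    (f : M →ₗ[A] X) : Prop :=
  𝒳 X ∧ ∀ Y : ModuleCat.{u} A, 𝒳 Y → ∀ g : M →ₗ[A] Y, ∃ h : X →ₗ[A] Y, h.comp f = g

/-- `𝒳` is contravariantly finite in `mod A`. -/
def ContravariantlyFinite (𝒳 : ModuleCat.{u} A → Prop) : Prop :=
  ∀ M : ModuleCat.{u} A, Module.Finite A M →
    ∃ (X : ModuleCat.{u} A) (f : X →ₗ[A] M), IsRightApprox A 𝒳 f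

/-- `𝒳` is covariantly finite in `mod A`. -/
def CovariantlyFinite (𝒳 : ModuleCat.{u} A → Prop) : Prop :=
  ∀ M : ModuleCat.{u} A, Module.Finite A M →
    ∃ (X : ModuleCat.{u} A) (f : M →ₗ[A] X), IsLeftApprox A 𝒳 f

/-- `𝒳` is functorially finite in `mod A`. -/
def FunctoriallyFinite (𝒳 : ModuleCat.{u} A → Prop) : Prop :=
  ContravariantlyFinite A 𝒳 ∧ CovariantlyFinite A 𝒳

end Torsion

section Indec

/-- An `A`-module is indecomposable if it is nonzero and admits no nontrivial direct sum
decomposition. -/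
def IsIndecomposable (M : Type u) [AddCommGroup M] [Module A M] : Prop :=
  Nontrivial M ∧ ∀ L L' : Submodule A M, IsCompl L L' → L = ⊥ ∨ L = ⊤

/-- The setoid identifying isomorphic indecomposable direct summands of `M`. -/
def summandSetoid (M : Type u) [AddCommGroup M] [Module A M] :
    Setoid {N : Submodule A M // (∃ L, IsCompl N L) ∧ IsIndecomposable A ↥N} where
  r N N' := Nonempty (↥N.1 ≃ₗ[A] ↥N'.1)
  iseqv := ⟨fun _ => ⟨LinearEquiv.refl _ _⟩, fun ⟨e⟩ => ⟨e.symm⟩, fun ⟨e⟩ ⟨f⟩ => ⟨e.trans f⟩⟩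

/-- `|M|`: the number of isomorphism classes of indecomposable direct summands of `M`. -/
noncomputable def numIndec (M : Type u) [AddCommGroup M] [Module A M] : ℕ :=
  Nat.card (Quotient (summandSetoid A M))

/-- `M` is basic: no indecomposable module occurs at least twice as a direct summand. -/
def IsBasic (M : Type u) [AddCommGroup M] [Module A M] : Prop :=
  ∀ L L' : Submodule A M, IsCompl L L' →
    ∀ (N : Type u) [AddCommGroup N] [Module A N], IsIndecomposable A N →
      ¬ Nonempty (↥L ≃ₗ[A] (N × N))

end Indec

section Tau

/-- The `K`-linear map given by the action of `op a : Aᵐᵒᵖ` on a right `A`-module `N`. -/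
def actLin (N : Type u) [AddCommGroup N] [Module K N] [Module Aᵐᵒᵖ N]
    [SMulCommClass K Aᵐᵒᵖ N] (a : A) : N →ₗ[K] N where
  toFun x := op a • x
  map_add' _ _ := smul_add _ _ _
  map_smul' k x := (smul_comm k (op a) x).symm

variable {N : Type u} [AddCommGroup N] [Module K N] [Module Aᵐᵒᵖ N] [SMulCommClass K Aᵐᵒᵖ N]

/-- The left `A`-action on the `K`-dual of a right `A`-module (i.e. `Aᵐᵒᵖ`-module):
`(a • φ) x = φ (x · a)`. -/
instance instDualSMul : SMul A (N →ₗ[K] K) := ⟨fun a φ => φ.comp (actLin K A N a)⟩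

theorem dualSMul_apply (a : A) (φ : N →ₗ[K] K) (x : N) : (a • φ) x = φ (op a • x) := rfl

/-- The left `A`-module structure on the `K`-dual `D(N) = Hom_K(N, K)` of a right
`A`-module `N`. -/
instance instDualModule : Module A (N →ₗ[K] K) where
  one_smul φ := by ext x; rw [dualSMul_apply, op_one, one_smul]
  mul_smul a b φ := by
    ext x
    rw [dualSMul_apply, dualSMul_apply, dualSMul_apply, op_mul, mul_smul]
  smul_zero a := by ext x; rw [dualSMul_apply]; rfl
  smul_add a φ ψ := by ext x; rw [dualSMul_apply]; rfl
  add_smul a b φ := by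
    ext x
    rw [dualSMul_apply, op_add, add_smul, map_add]
    rfl
  zero_smul φ := by ext x; rw [dualSMul_apply, op_zero, zero_smul, map_zero]; rfl

instance instDualSMulCommClass : SMulCommClass A K (N →ₗ[K] K) :=
  ⟨fun _ _ _ => by ext _; rfl⟩

variable (M : Type u) [AddCommGroup M] [Module A M]

/-- A projective presentation `P1 → P0 → M → 0` of `M` by finitely generated projectives. -/
structure ProjPres where
  /-- the degree-zero term -/
  P0 : Type u
  /-- the degree-one term -/
  P1 : Type u
  [acg0 : AddCommGroup P0]
  [mod0 : Module A P0]
  [acg1 : AddCommGroup P1]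
  [mod1 : Module A P1]
  proj0 : Module.Projective A P0
  proj1 : Module.Projective A P1
  fin0 : Module.Finite A P0
  fin1 : Module.Finite A P1
  /-- the augmentation `P0 → M` -/
  d0 : P0 →ₗ[A] M
  /-- the differential `P1 → P0` -/
  d1 : P1 →ₗ[A] P0
  surj : Function.Surjective d0
  exact : LinearMap.range d1 = LinearMap.ker d0

attribute [instance] ProjPres.acg0 ProjPres.mod0 ProjPres.acg1 ProjPres.mod1

variable {K A M}

/-- A projective presentation is minimal if both `d0 : P0 → M` and `d1 : P1 → ker d0` are
projective covers, i.e. have superfluous kernels. -/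
def ProjPres.IsMinimal (pres : ProjPres A M) : Prop :=
  (∀ L : Submodule A pres.P0, L ⊔ LinearMap.ker pres.d0 = ⊤ → L = ⊤) ∧
  ∀ L : Submodule A pres.P1, L ⊔ LinearMap.ker pres.d1 = ⊤ → L = ⊤

/-- The map `Hom_A(P0, A) → Hom_A(P1, A)` of right `A`-modules induced by `d1`. -/
def ProjPres.dualD1 (pres : ProjPres A M) :
    (pres.P0 →ₗ[A] A) →ₗ[Aᵐᵒᵖ] (pres.P1 →ₗ[A] A) where
  toFun f := f.comp pres.d1
  map_add' _ _ := rfl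
  map_smul' _ _ := rfl

/-- The transpose `Tr M = coker (Hom_A(P0,A) → Hom_A(P1,A))`, a right `A`-module. -/
def ProjPres.Tr (pres : ProjPres A M) : Type u :=
  (pres.P1 →ₗ[A] A) ⧸ LinearMap.range pres.dualD1

noncomputable instance (pres : ProjPres A M) : AddCommGroup pres.Tr :=
  inferInstanceAs (AddCommGroup ((pres.P1 →ₗ[A] A) ⧸ LinearMap.range pres.dualD1))

noncomputable instance (pres : ProjPres A M) : Module Aᵐᵒᵖ pres.Tr :=
  inferInstanceAs (Module Aᵐᵒᵖ ((pres.P1 →ₗ[A] A) ⧸ LinearMap.range pres.dualD1))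

noncomputable instance (pres : ProjPres A M) : Module K pres.Tr :=
  inferInstanceAs (Module K ((pres.P1 →ₗ[A] A) ⧸ LinearMap.range pres.dualD1))

noncomputable instance (pres : ProjPres A M) : SMulCommClass K Aᵐᵒᵖ pres.Tr :=
  inferInstanceAs (SMulCommClass K Aᵐᵒᵖ
    ((pres.P1 →ₗ[A] A) ⧸ LinearMap.range pres.dualD1))

variable (K) in
/-- The Auslander–Reiten translate `τ M = D (Tr M)` computed from a projective
presentation of `M`; it is a left `A`-module via the dual module structure. -/
def ProjPres.tau (pres : ProjPres A M) : Type u := pres.Tr →ₗ[K] K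

noncomputable instance (pres : ProjPres A M) : AddCommGroup (pres.tau K) :=
  inferInstanceAs (AddCommGroup (pres.Tr →ₗ[K] K))

noncomputable instance (pres : ProjPres A M) : Module A (pres.tau K) :=
  inferInstanceAs (Module A (pres.Tr →ₗ[K] K))

noncomputable instance (pres : ProjPres A M) : Module K (pres.tau K) :=
  inferInstanceAs (Module K (pres.Tr →ₗ[K] K))

noncomputable instance (pres : ProjPres A M) : SMulCommClass A K (pres.tau K) :=
  inferInstanceAs (SMulCommClass A K (pres.Tr →ₗ[K] K))

variable (K A)

/-- `T` is τ-rigid: `Hom_A(T, τT) = 0`, where `τT` is computed from any minimal projective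
presentation of `T`. -/
def IsTauRigid (T : Type u) [AddCommGroup T] [Module A T] : Prop :=
  ∀ pres : ProjPres A T, pres.IsMinimal → ∀ f : T →ₗ[A] pres.tau K, f = 0

/-- `(T, P)` is a τ-rigid pair: `P` is projective, `T` is τ-rigid and `Hom_A(P, T) = 0`. -/
def IsTauRigidPair (T P : Type u) [AddCommGroup T] [Module A T]
    [AddCommGroup P] [Module A P] : Prop :=
  Module.Projective A P ∧ IsTauRigid K A T ∧ ∀ f : P →ₗ[A] T, f = 0

end Tau

section TauPairs

/-- A basic τ-rigid pair `(T, P) = (⊕ i, T i, ⊕ j, P j)`, presented through its (pairwise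
nonisomorphic) indecomposable direct summands. -/
structure TauPair where
  /-- the number of indecomposable summands of `T` -/
  k : ℕ
  /-- the number of indecomposable summands of `P` -/
  m : ℕ
  /-- the indecomposable summands of `T` -/
  T : Fin k → Type u
  /-- the indecomposable summands of `P` -/
  P : Fin m → Type u
  [accT : ∀ i, AddCommGroup (T i)]
  [modT : ∀ i, Module A (T i)]
  [accP : ∀ j, AddCommGroup (P j)]
  [modP : ∀ j, Module A (P j)]
  finT : ∀ i, Module.Finite A (T i)
  finP : ∀ j, Module.Finite A (P j)
  indT : ∀ i, IsIndecomposable A (T i)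
  indP : ∀ j, IsIndecomposable A (P j)
  basicT : ∀ i i', Nonempty (T i ≃ₗ[A] T i') → i = i'
  basicP : ∀ j j', Nonempty (P j ≃ₗ[A] P j') → j = j'
  projP : ∀ j, Module.Projective A (P j)
  rigid : IsTauRigid K A (∀ i, T i)
  homPT : ∀ j i, ∀ f : P j →ₗ[A] T i, f = 0

attribute [instance] TauPair.accT TauPair.modT TauPair.accP TauPair.modP

variable {K A}

/-- The underlying module `T = ⊕ i, T i` of a τ-rigid pair. -/
abbrev TauPair.Tmod (q : TauPair K A) : Type u := ∀ i, q.T i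

/-- The underlying projective module `P = ⊕ j, P j` of a τ-rigid pair. -/
abbrev TauPair.Pmod (q : TauPair K A) : Type u := ∀ j, q.P j

variable (K A) in
/-- `|A| = n`: the number of isomorphism classes of indecomposable projective
(equivalently, simple) `A`-modules, i.e. of indecomposable direct summands of `A`. -/
noncomputable def rankA : ℕ := numIndec A A

/-- A τ-rigid pair is τ-tilting if `|T| + |P| = |A|`. -/
def TauPair.IsTauTilting (q : TauPair K A) : Prop := q.k + q.m = rankA A

/-- A τ-rigid pair is almost τ-tilting if `|T| + |P| = |A| - 1`. -/
def TauPair.IsAlmostTauTilting (q : TauPair K A) : Prop := q.k + q.m + 1 = rankA A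

/-- Two basic τ-rigid pairs are equivalent (isomorphic) if their indecomposable summands
match up bijectively, up to isomorphism. -/
def TauPair.Equiv (q q' : TauPair K A) : Prop :=
  ∃ (e : Fin q.k ≃ Fin q'.k) (f : Fin q.m ≃ Fin q'.m),
    (∀ i, Nonempty (q.T i ≃ₗ[A] q'.T (e i))) ∧ ∀ j, Nonempty (q.P j ≃ₗ[A] q'.P (f j))

/-- `ext` is a completion of `q`, i.e. `q` is a direct summand of `ext`. -/
def TauPair.IsCompletion (q ext : TauPair K A) : Prop :=
  ∃ (ι : Fin q.k ↪ Fin ext.k) (κ : Fin q.m ↪ Fin ext.m),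
    (∀ i, Nonempty (q.T i ≃ₗ[A] ext.T (ι i))) ∧ ∀ j, Nonempty (q.P j ≃ₗ[A] ext.P (κ j))

end TauPairs

section GVectors

variable {n : ℕ} (PP : Fin n → Type u) [∀ i, AddCommGroup (PP i)] [∀ i, Module A (PP i)]

/-- `PP : Fin n → Type u` is a complete irredundant list of the indecomposable projective
`A`-modules `P(1), …, P(n)`. -/
def ProjParam : Prop :=
  (∀ i, Module.Projective A (PP i)) ∧ (∀ i, Module.Finite A (PP i)) ∧
    (∀ i, IsIndecomposable A (PP i)) ∧
    (∀ i j, Nonempty (PP i ≃ₗ[A] PP j) → i = j) ∧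
    ∀ (Q : Type u) [AddCommGroup Q] [Module A Q], Module.Finite A Q →
      Module.Projective A Q → IsIndecomposable A Q → ∃ i, Nonempty (Q ≃ₗ[A] PP i)

/-- `g : Fin n → ℤ` is the `g`-vector of `M`: for a minimal projective presentation
`P1 → P0 → M → 0` with `P0 ≅ ⊕ i, P(i)^(a i)` and `P1 ≅ ⊕ i, P(i)^(b i)` one has
`g = a - b`. -/
def IsGVector (M : Type u) [AddCommGroup M] [Module A M] (g : Fin n → ℤ) : Prop :=
  ∃ pres : ProjPres A M, pres.IsMinimal ∧
    ∃ a b : Fin n → ℕ,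
      Nonempty ((∀ i, Fin (a i) → PP i) ≃ₗ[A] pres.P0) ∧
      Nonempty ((∀ i, Fin (b i) → PP i) ≃ₗ[A] pres.P1) ∧
      g = fun i => (a i : ℤ) - (b i : ℤ)

variable {A PP}

/-- The cone `C_{(T,P)}` spanned by the `g`-vectors `g^{T i}` and `-g^{P j}` of the
indecomposable summands of a τ-rigid pair. -/
def cone {k m : ℕ} (gT : Fin k → Fin n → ℤ) (gP : Fin m → Fin n → ℤ) :
    Set (Fin n → ℝ) :=
  { v | ∃ (α : Fin k → ℝ) (β : Fin m → ℝ), (∀ i, 0 ≤ α i) ∧ (∀ j, 0 ≤ β j) ∧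
      v = (∑ i, α i • fun l => (gT i l : ℝ)) - ∑ j, β j • fun l => (gP j l : ℝ) }

/-- The interior cone `C°_{(T,P)}`, where all coefficients are strictly positive. -/
def interiorCone {k m : ℕ} (gT : Fin k → Fin n → ℤ) (gP : Fin m → Fin n → ℤ) :
    Set (Fin n → ℝ) :=
  { v | ∃ (α : Fin k → ℝ) (β : Fin m → ℝ), (∀ i, 0 < α i) ∧ (∀ j, 0 < β j) ∧
      v = (∑ i, α i • fun l => (gT i l : ℝ)) - ∑ j, β j • fun l => (gP j l : ℝ) }

end GVectors

end WCS
namespace WCS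

variable (K : Type u) [Field K] (A : Type u) [Ring A] [Algebra K A] [FiniteDimensional K A]


section MinTorsionAux

/-- The subquotient `q / (p ⊓ q)`. -/
abbrev SQ {X : Type u} [AddCommGroup X] [Module A X] (p q : Submodule A X) : Type u :=
  ↥q ⧸ Submodule.comap q.subtype p

theorem infac_of_surj {M X Y : Type u} [AddCommGroup M] [Module A M]
    [AddCommGroup X] [Module A X] [AddCommGroup Y] [Module A Y]
    (h : InFac A M X) (π : X →ₗ[A] Y) (hπ : Function.Surjective π) : InFac A M Y := by
  obtain ⟨k, f, hf⟩ := h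
  exact ⟨k, π.comp f, hπ.comp hf⟩

theorem infac_sq_congr {M X : Type u} [AddCommGroup M] [Module A M]
    [AddCommGroup X] [Module A X] {p p' q q' : Submodule A X} (hp : p = p') (hq : q = q')
    (h : InFac A M (SQ A p q)) : InFac A M (SQ A p' q') := by
  subst hp; subst hq; exact h

theorem sq_map_surj {X Y : Type u} [AddCommGroup X] [Module A X] [AddCommGroup Y] [Module A Y]
    (π : X →ₗ[A] Y) (p q : Submodule A X) :
    ∃ φ : SQ A p q →ₗ[A] SQ A (p.map π) (q.map π), Function.Surjective φ := by
  set r : Submodule A ↥(q.map π) := Submodule.comap (q.map π).subtype (p.map π)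
  have hres : ∀ x ∈ q, π x ∈ q.map π := fun x hx => Submodule.mem_map_of_mem hx
  set ψ : ↥q →ₗ[A] SQ A (p.map π) (q.map π) := r.mkQ.comp (π.restrict hres) with hψ
  have hker : Submodule.comap q.subtype p ≤ LinearMap.ker ψ := by
    intro x hx
    simp only [hψ, LinearMap.mem_ker, LinearMap.comp_apply, Submodule.mkQ_apply,
      Submodule.Quotient.mk_eq_zero]
    exact Submodule.mem_map_of_mem hx
  refine ⟨Submodule.liftQ _ ψ hker, ?_⟩
  have h1 : Function.Surjective ψ := by
    apply Function.Surjective.comp (Submodule.mkQ_surjective r)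
    rintro ⟨y, x, hx, rfl⟩
    exact ⟨⟨x, hx⟩, rfl⟩
  intro z
  obtain ⟨x, hx⟩ := h1 z
  exact ⟨Submodule.Quotient.mk x, hx⟩

theorem sq_comap_equiv {Y Z : Type u} [AddCommGroup Y] [Module A Y] [AddCommGroup Z] [Module A Z]
    (g : Y →ₗ[A] Z) (p q : Submodule A Z) (hq : q ≤ LinearMap.range g) :
    Nonempty (SQ A (p.comap g) (q.comap g) ≃ₗ[A] SQ A p q) := by
  set r : Submodule A ↥q := Submodule.comap q.subtype p
  have hres : ∀ x ∈ q.comap g, g x ∈ q := fun x hx => hx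
  set ψ : ↥(q.comap g) →ₗ[A] SQ A p q := r.mkQ.comp (g.restrict hres) with hψ
  have hker : LinearMap.ker ψ = Submodule.comap (q.comap g).subtype (p.comap g) := by
    ext x
    simp [hψ, r, Submodule.Quotient.mk_eq_zero]
  set φ := Submodule.liftQ _ ψ hker.ge
  have hinj : Function.Injective φ := by
    rw [← LinearMap.ker_eq_bot]
    exact Submodule.ker_liftQ_eq_bot _ _ hker.ge hker.le
  have hsurj : Function.Surjective φ := by
    have h1 : Function.Surjective ψ := by
      apply Function.Surjective.comp (Submodule.mkQ_surjective r)
      rintro ⟨y, hy⟩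
      obtain ⟨x, rfl⟩ := hq hy
      exact ⟨⟨x, hy⟩, rfl⟩
    intro z
    obtain ⟨x, hx⟩ := h1 z
    exact ⟨Submodule.Quotient.mk x, hx⟩
  exact ⟨LinearEquiv.ofBijective φ ⟨hinj, hsurj⟩⟩

/-- A `ℕ`-indexed reformulation of `InFiltFac`. -/
def FiltN (M X : Type u) [AddCommGroup M] [Module A M] [AddCommGroup X] [Module A X] : Prop :=
  ∃ (t : ℕ) (s : ℕ → Submodule A X), s 0 = ⊥ ∧ s t = ⊤ ∧
    (∀ j < t, s j ≤ s (j + 1)) ∧ ∀ j < t, InFac A M (SQ A (s j) (s (j + 1)))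

theorem inFiltFac_iff_filtN {M X : Type u} [AddCommGroup M] [Module A M]
    [AddCommGroup X] [Module A X] : InFiltFac A M X ↔ FiltN A M X := by
  constructor
  · rintro ⟨t, s, h0, ht, hm, hf⟩
    refine ⟨t, fun j => s ⟨min j t, by omega⟩, ?_, ?_, ?_, ?_⟩
    · show s ⟨min 0 t, by omega⟩ = ⊥
      have e : (⟨min 0 t, by omega⟩ : Fin (t + 1)) = 0 := by ext; simp
      rw [e, h0]
    · show s ⟨min t t, by omega⟩ = ⊤
      have e : (⟨min t t, by omega⟩ : Fin (t + 1)) = Fin.last t := by ext; simp [Fin.last]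
      rw [e, ht]
    · intro j hj
      show s ⟨min j t, by omega⟩ ≤ s ⟨min (j + 1) t, by omega⟩
      have e1 : (⟨min j t, by omega⟩ : Fin (t + 1)) = (⟨j, hj⟩ : Fin t).castSucc := by
        ext; simp [Nat.min_eq_left hj.le]
      have e2 : (⟨min (j + 1) t, by omega⟩ : Fin (t + 1)) = (⟨j, hj⟩ : Fin t).succ := by
        ext; simp [Nat.min_eq_left hj]
      rw [e1, e2]
      exact hm ⟨j, hj⟩
    · intro j hj
      show InFac A M (SQ A (s ⟨min j t, by omega⟩) (s ⟨min (j + 1) t, by omega⟩))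
      have e1 : s ((⟨j, hj⟩ : Fin t).castSucc) = s ⟨min j t, by omega⟩ := by
        congr 1; ext; simp [Nat.min_eq_left hj.le]
      have e2 : s ((⟨j, hj⟩ : Fin t).succ) = s ⟨min (j + 1) t, by omega⟩ := by
        congr 1; ext; simp [Nat.min_eq_left hj]
      exact infac_sq_congr A e1 e2 (hf ⟨j, hj⟩)
  · rintro ⟨t, s, h0, ht, hm, hf⟩
    refine ⟨t, fun j => s j.val, ?_, ?_, ?_, ?_⟩
    · show s ((0 : Fin (t + 1)) : ℕ) = ⊥
      rw [Fin.val_zero]; exact h0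
    · show s ((Fin.last t : Fin (t + 1)) : ℕ) = ⊤
      rw [Fin.val_last]; exact ht
    · intro j
      show s (j.castSucc : ℕ) ≤ s (j.succ : ℕ)
      rw [Fin.coe_castSucc, Fin.val_succ]
      exact hm j.val j.isLt
    · intro j
      show InFac A M (SQ A (s (j.castSucc : ℕ)) (s (j.succ : ℕ)))
      have e1 : s (j.castSucc : ℕ) = s j.val := by rw [Fin.coe_castSucc]
      have e2 : s (j.succ : ℕ) = s (j.val + 1) := by rw [Fin.val_succ]
      exact infac_sq_congr A e1.symm e2.symm (hf j.val j.isLt)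

theorem filtN_map {M X Y : Type u} [AddCommGroup M] [Module A M]
    [AddCommGroup X] [Module A X] [AddCommGroup Y] [Module A Y]
    (π : X →ₗ[A] Y) (hπ : Function.Surjective π) (h : FiltN A M X) : FiltN A M Y := by
  obtain ⟨t, s, h0, ht, hm, hf⟩ := h
  refine ⟨t, fun j => (s j).map π, ?_, ?_, ?_, ?_⟩
  · show (s 0).map π = ⊥
    rw [h0, Submodule.map_bot]
  · show (s t).map π = ⊤
    rw [ht, Submodule.map_top, LinearMap.range_eq_top.2 hπ]
  · intro j hj
    exact Submodule.map_mono (hm j hj)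
  · intro j hj
    obtain ⟨φ, hφ⟩ := sq_map_surj A π (s j) (s (j + 1))
    exact infac_of_surj A (hf j hj) φ hφ

theorem filtN_ext {M X Y Z : Type u} [AddCommGroup M] [Module A M]
    [AddCommGroup X] [Module A X] [AddCommGroup Y] [Module A Y] [AddCommGroup Z] [Module A Z]
    (f : X →ₗ[A] Y) (g : Y →ₗ[A] Z) (hg : Function.Surjective g)
    (hfg : LinearMap.range f = LinearMap.ker g)
    (hX : FiltN A M X) (hZ : FiltN A M Z) : FiltN A M Y := by
  obtain ⟨t, sX, hX0, hXt, hXm, hXf⟩ := hX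
  obtain ⟨u, sZ, hZ0, hZt, hZm, hZf⟩ := hZ
  have key : (sX t).map f = (sZ 0).comap g := by
    rw [hXt, hZ0, Submodule.map_top, hfg]
    rfl
  set sY : ℕ → Submodule A Y :=
    fun j => if j ≤ t then (sX j).map f else (sZ (j - t)).comap g with hsY
  have hrg : LinearMap.range g = ⊤ := LinearMap.range_eq_top.2 hg
  refine ⟨t + u, sY, ?_, ?_, ?_, ?_⟩
  · show (if 0 ≤ t then (sX 0).map f else (sZ (0 - t)).comap g) = ⊥
    rw [if_pos (Nat.zero_le t), hX0, Submodule.map_bot]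
  · show (if t + u ≤ t then (sX (t + u)).map f else (sZ (t + u - t)).comap g) = ⊤
    by_cases hu : t + u ≤ t
    · rw [if_pos hu]
      have hu0 : u = 0 := by omega
      subst hu0
      show (sX t).map f = ⊤
      rw [key, hZt, Submodule.comap_top]
    · rw [if_neg hu]
      have e : t + u - t = u := by omega
      rw [e, hZt, Submodule.comap_top]
  · intro j hj
    show (if j ≤ t then (sX j).map f else (sZ (j - t)).comap g) ≤
      (if j + 1 ≤ t then (sX (j + 1)).map f else (sZ (j + 1 - t)).comap g)
    rcases Nat.lt_or_ge j t with h1 | h1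
    · rw [if_pos (by omega : j ≤ t), if_pos (by omega : j + 1 ≤ t)]
      exact Submodule.map_mono (hXm j h1)
    · rcases Nat.eq_or_lt_of_le h1 with heq | h2
      · subst heq
        rw [if_pos le_rfl, if_neg (by omega)]
        have e : t + 1 - t = 1 := by omega
        rw [e, key]
        exact Submodule.comap_mono (hZm 0 (by omega))
      · rw [if_neg (by omega), if_neg (by omega)]
        have e : j + 1 - t = (j - t) + 1 := by omega
        rw [e]
        exact Submodule.comap_mono (hZm (j - t) (by omega))
  · intro j hj
    rcases Nat.lt_or_ge j t with h1 | h1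
    · have e1 : sY j = (sX j).map f := by
        show (if j ≤ t then (sX j).map f else (sZ (j - t)).comap g) = (sX j).map f
        rw [if_pos (by omega : j ≤ t)]
      have e2 : sY (j + 1) = (sX (j + 1)).map f := by
        show (if j + 1 ≤ t then (sX (j + 1)).map f else (sZ (j + 1 - t)).comap g)
          = (sX (j + 1)).map f
        rw [if_pos (by omega : j + 1 ≤ t)]
      obtain ⟨φ, hφ⟩ := sq_map_surj A f (sX j) (sX (j + 1))
      exact infac_sq_congr A e1.symm e2.symm (infac_of_surj A (hXf j h1) φ hφ)
    · have hu0 : j - t < u := by omega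
      have e1 : sY j = (sZ (j - t)).comap g := by
        show (if j ≤ t then (sX j).map f else (sZ (j - t)).comap g) = (sZ (j - t)).comap g
        rcases Nat.eq_or_lt_of_le h1 with heq | h2
        · subst heq
          rw [if_pos le_rfl, Nat.sub_self]
          exact key
        · rw [if_neg (by omega)]
      have e2 : sY (j + 1) = (sZ (j - t + 1)).comap g := by
        show (if j + 1 ≤ t then (sX (j + 1)).map f else (sZ (j + 1 - t)).comap g)
          = (sZ (j - t + 1)).comap g
        rw [if_neg (by omega : ¬ (j + 1 ≤ t))]
        have e : j + 1 - t = (j - t) + 1 := by omega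
        rw [e]
      obtain ⟨e⟩ := sq_comap_equiv A g (sZ (j - t)) (sZ (j - t + 1)) (by rw [hrg]; exact le_top)
      exact infac_sq_congr A e1.symm e2.symm
        (infac_of_surj A (hZf (j - t) hu0) e.symm.toLinearMap e.symm.surjective)

section TorsionClosure

variable {M : Type u} [AddCommGroup M] [Module A M] [Module.Finite A M]
variable (𝒯 : ModuleCat.{u} A → Prop) (h𝒯 : IsTorsionClass A 𝒯) (hM : 𝒯 (ModuleCat.of A M))

include h𝒯 hM

theorem torsion_zero (N : ModuleCat.{u} A) (hs : Subsingleton N) : 𝒯 N := by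
  have h1 := h𝒯.2.2.1 (ModuleCat.of A M) hM ⊤
  haveI := hs
  haveI : Subsingleton (M ⧸ (⊤ : Submodule A M)) :=
    Submodule.Quotient.subsingleton_iff.2 rfl
  exact h𝒯.2.1 _ _ ⟨LinearEquiv.ofSubsingleton _ _⟩ h1

theorem torsion_pow : ∀ k : ℕ, 𝒯 (ModuleCat.of A (Fin k → M)) := by
  intro k
  induction k with
  | zero => exact torsion_zero A 𝒯 h𝒯 hM _ inferInstance
  | succ k ih =>
    set f : M →ₗ[A] (Fin (k + 1) → M) :=
      { toFun := fun x => Fin.cons x 0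
        map_add' := fun x y => by
          funext i
          cases i using Fin.cases <;> simp
        map_smul' := fun a x => by
          funext i
          cases i using Fin.cases <;> simp } with hfdef
    set g : (Fin (k + 1) → M) →ₗ[A] (Fin k → M) := LinearMap.funLeft A M Fin.succ with hgdef
    have hf : Function.Injective f := by
      intro x y hxy
      have := congrFun hxy 0
      simpa [hfdef] using this
    have hg : Function.Surjective g := by
      intro v
      refine ⟨Fin.cons 0 v, ?_⟩
      funext i
      simp [hgdef, LinearMap.funLeft]
    have hfg : LinearMap.range f = LinearMap.ker g := by
      ext v
      constructor
      · rintro ⟨x, rfl⟩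
        show g (Fin.cons x 0) = 0
        funext i
        simp [hfdef, hgdef, LinearMap.funLeft]
      · intro hv
        have hv' : ∀ i : Fin k, v i.succ = 0 := by
          intro i
          have : g v = 0 := hv
          exact congrFun this i
        refine ⟨v 0, ?_⟩
        have hc : f (v 0) = Fin.cons (v 0) (0 : Fin k → M) := rfl
        rw [hc]
        funext i
        cases i using Fin.cases with
        | zero => rw [Fin.cons_zero]
        | succ i => simp [hv' i]
    exact h𝒯.2.2.2 (ModuleCat.of A M) (ModuleCat.of A (Fin (k + 1) → M))
      (ModuleCat.of A (Fin k → M)) f g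
      (inferInstance : Module.Finite A (Fin (k + 1) → M)) hf hg hfg hM ih

theorem torsion_fac (N : ModuleCat.{u} A) (h : InFac A M N) : 𝒯 N := by
  obtain ⟨k, f, hf⟩ := h
  have hq := h𝒯.2.2.1 (ModuleCat.of A (Fin k → M)) (torsion_pow A 𝒯 h𝒯 hM k) (LinearMap.ker f)
  exact h𝒯.2.1 _ N ⟨f.quotKerEquivOfSurjective hf⟩ hq

theorem torsion_filt : ∀ (t : ℕ) (N : ModuleCat.{u} A), Module.Finite A N →
    (∃ s : ℕ → Submodule A N, s 0 = ⊥ ∧ s t = ⊤ ∧ (∀ j < t, s j ≤ s (j + 1)) ∧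
      ∀ j < t, InFac A M (SQ A (s j) (s (j + 1)))) → 𝒯 N := by
  intro t
  induction t with
  | zero =>
    rintro N _ ⟨s, h0, ht, -, -⟩
    have hbt : (⊥ : Submodule A N) = ⊤ := h0 ▸ ht
    have hs : Subsingleton N := by
      constructor
      intro a b
      have ha : a ∈ (⊥ : Submodule A N) := hbt ▸ Submodule.mem_top
      have hb : b ∈ (⊥ : Submodule A N) := hbt ▸ Submodule.mem_top
      rw [Submodule.mem_bot] at ha hb
      rw [ha, hb]
    exact torsion_zero A 𝒯 h𝒯 hM N hs
  | succ t ih =>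
    rintro N hN ⟨s, h0, ht, hm, hf⟩
    haveI := hN
    set L : Submodule A N := s 1 with hL
    -- the bottom layer is in `Fac M`
    have hLfac : InFac A M ↥L := by
      have h1 : InFac A M (SQ A (s 0) (s 1)) := hf 0 (by omega)
      have h2 : InFac A M (SQ A (⊥ : Submodule A N) L) := infac_sq_congr A h0 rfl h1
      have e : SQ A (⊥ : Submodule A N) L ≃ₗ[A] ↥L :=
        Submodule.quotEquivOfEqBot _ (by rw [Submodule.comap_bot, Submodule.ker_subtype])
      exact infac_of_surj A h2 e.toLinearMap e.surjective
    have hX : 𝒯 (ModuleCat.of A ↥L) :=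
      torsion_fac A 𝒯 h𝒯 hM (ModuleCat.of A ↥L) hLfac
    -- the quotient `N ⧸ L` carries an induced filtration of length `t`
    have hZ : 𝒯 (ModuleCat.of A ((N : Type u) ⧸ L)) := by
      apply ih (ModuleCat.of A ((N : Type u) ⧸ L))
        (inferInstance : Module.Finite A ((N : Type u) ⧸ L))
      refine ⟨fun j => (s (j + 1)).map L.mkQ, ?_, ?_, ?_, ?_⟩
      · show (s 1).map L.mkQ = ⊥
        rw [eq_bot_iff]
        rintro x hx
        obtain ⟨y, hy, rfl⟩ := hx
        simp only [Submodule.mem_bot, Submodule.mkQ_apply, Submodule.Quotient.mk_eq_zero]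
        exact hy
      · show (s (t + 1)).map L.mkQ = ⊤
        rw [ht, Submodule.map_top, LinearMap.range_eq_top.2 (Submodule.mkQ_surjective L)]
      · intro j hj
        exact Submodule.map_mono (hm (j + 1) (by omega))
      · intro j hj
        obtain ⟨φ, hφ⟩ := sq_map_surj A L.mkQ (s (j + 1)) (s (j + 2))
        exact infac_of_surj A (hf (j + 1) (by omega)) φ hφ
    exact h𝒯.2.2.2 (ModuleCat.of A ↥L) N (ModuleCat.of A ((N : Type u) ⧸ L))
      L.subtype L.mkQ hN (Submodule.injective_subtype L) (Submodule.mkQ_surjective L)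
      (by rw [Submodule.range_subtype, Submodule.ker_mkQ]) hX hZ

end TorsionClosure

end MinTorsionAux

/-- For any `M ∈ mod A`, the subcategory `Filt (Fac M)` is a torsion
class in `mod A`, and it is the minimal one containing `M`: every torsion class
containing `M` contains `Filt (Fac M)`. -/
theorem filt_fac_minimal_torsion_class
    (M : Type u) [AddCommGroup M] [Module A M] [Module.Finite A M] :
    IsTorsionClass A (fun N : ModuleCat.{u} A => Module.Finite A N ∧ InFiltFac A M N) ∧
    ∀ 𝒯 : ModuleCat.{u} A → Prop, IsTorsionClass A 𝒯 → 𝒯 (ModuleCat.of A M) →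
      ∀ N : ModuleCat.{u} A, Module.Finite A N → InFiltFac A M N → 𝒯 N := by
  constructor
  · refine ⟨fun N h => h.1, ?_, ?_, ?_⟩
    · rintro X Y ⟨e⟩ ⟨hfin, hfilt⟩
      refine ⟨Module.Finite.equiv e, ?_⟩
      rw [inFiltFac_iff_filtN] at hfilt ⊢
      exact filtN_map A e.toLinearMap e.surjective hfilt
    · rintro N ⟨hfin, hfilt⟩ P
      haveI := hfin
      refine ⟨(inferInstance : Module.Finite A ((N : Type u) ⧸ P)), ?_⟩
      rw [inFiltFac_iff_filtN] at hfilt ⊢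
      exact filtN_map A P.mkQ (Submodule.mkQ_surjective P) hfilt
    · rintro X Y Z f g hYfin hf hg hfg ⟨hXfin, hXfilt⟩ ⟨hZfin, hZfilt⟩
      refine ⟨hYfin, ?_⟩
      rw [inFiltFac_iff_filtN] at hXfilt hZfilt ⊢
      exact filtN_ext A f g hg hfg hXfilt hZfilt
  · intro 𝒯 h𝒯 hM N hN hfilt
    rw [inFiltFac_iff_filtN] at hfilt
    exact torsion_filt A 𝒯 h𝒯 hM hfilt.choose N hN hfilt.choose_spec


end WCS
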